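/- Let $k$ be a field, $n \ge 3$, $S = k[x_0, \ldots, x_n]$, and let $F, G$ be relatively prime homogeneous polynomials of degree $d \ge 1$ in $k[x_2, \ldots, x_n]$. Let $I = (x_0^2, x_0 x_1, x_1^2, x_0 G - x_1 F)$. Then for all sufficiently large $m$, $\dim_k (S/I)_m = \binom{n-2+m}{m} + 2\binom{n-3+m}{m-1} - \binom{n-3+m-d}{m-1-d}$. In particular, this equals $P_n(m) = 2\binom{n-2+m}{m} - \binom{n-4+m}{m}$ for all large $m$ if and only if $d = 1$. -/

import Mathlib

set_option maxHeartbeats 1600000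


open MvPolynomial

namespace Stmt6Aux


lemma degree_add' {σ : Type*} (f g : σ →₀ ℕ) : (f + g).degree = f.degree + g.degree := by
  simp only [Finsupp.degree_eq_weight_one]; exact map_add _ _ _

lemma degree_single' {σ : Type*} (i : σ) (c : ℕ) : (Finsupp.single i c).degree = c := by
  classical
  rcases eq_or_ne c 0 with h | h
  · simp [h]
  · simp [Finsupp.degree_apply, Finsupp.support_single_ne_zero _ h]

lemma finite_deg_subset {N : ℕ} {s : Set (Fin N →₀ ℕ)} {m : ℕ}
    (h : ∀ u ∈ s, Finsupp.degree u ≤ m) : s.Finite :=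
  Set.Finite.subset (Finsupp.finite_of_degree_le m) h

/-- degree-m exponents over a fintype are equinumerous with `Sym`. -/
lemma card_degree (N m : ℕ) :
    Nat.card {u : Fin N →₀ ℕ // u.degree = m} = (N + m - 1).choose m := by
  classical
  have e : {u : Fin N →₀ ℕ // u.degree = m} ≃ Sym (Fin N) m :=
    Equiv.subtypeEquiv (Finsupp.orderIsoMultiset).toEquiv (fun u => by
      have : (Finsupp.orderIsoMultiset u : Multiset (Fin N)).card = u.degree := by
        simp [Finsupp.coe_orderIsoMultiset, Finsupp.card_toMultiset, Finsupp.degree_apply, Finsupp.sum]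
      constructor
      · intro h; exact this.trans h
      · intro h; exact this.symm.trans h)
  rw [Nat.card_congr e, Nat.card_eq_fintype_card, Sym.card_sym_eq_multichoose,
    Fintype.card_fin, Nat.multichoose_eq]

variable {k : Type*} [Field k]

lemma fd_restrictSupport {N : ℕ} {s : Set (Fin N →₀ ℕ)} (hs : s.Finite) :
    FiniteDimensional k (restrictSupport k s) := by
  have := hs.to_subtype
  exact Module.Finite.of_basis (basisRestrictSupport k s)

lemma finrank_restrictSupport {N : ℕ} {s : Set (Fin N →₀ ℕ)} (hs : s.Finite) :
    Module.finrank k (restrictSupport k s) = Nat.card s := by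
  have := hs.to_subtype
  rw [Module.finrank_eq_nat_card_basis (basisRestrictSupport k s)]

lemma homSub_eq (N m : ℕ) :
    homogeneousSubmodule (Fin N) k m = restrictSupport k {u | u.degree = m} :=
  homogeneousSubmodule_eq_finsupp_supported _ _ m

lemma finrank_homSub (N m : ℕ) :
    Module.finrank k (homogeneousSubmodule (Fin N) k m) = (N + m - 1).choose m := by
  rw [homSub_eq,
    finrank_restrictSupport (s := {u | u.degree = m}) (finite_deg_subset (fun u hu => le_of_eq hu)),
    ← card_degree N m]
  rfl

lemma fd_homSub (N m : ℕ) : FiniteDimensional k (homogeneousSubmodule (Fin N) k m) := by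
  rw [homSub_eq]
  exact fd_restrictSupport (finite_deg_subset (fun u hu => le_of_eq hu))

/-- rank–nullity for a mapped submodule. -/
lemma finrank_map_helper {K V W : Type*} [Field K] [AddCommGroup V] [Module K V]
    [AddCommGroup W] [Module K W] (f : V →ₗ[K] W) (p : Submodule K V)
    [FiniteDimensional K p] :
    Module.finrank K (p.map f) + Module.finrank K ((LinearMap.ker f) ⊓ p : Submodule K V)
      = Module.finrank K p := by
  have h := LinearMap.finrank_range_add_finrank_ker (f.domRestrict p)
  rw [LinearMap.range_domRestrict] at h
  have hker : LinearMap.ker (f.domRestrict p)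
      = Submodule.comap p.subtype (LinearMap.ker f ⊓ p) := by
    rw [LinearMap.ker_domRestrict, Submodule.comap_inf, Submodule.comap_subtype_self, inf_top_eq]
  rw [hker, (Submodule.comapSubtypeEquivOfLe (inf_le_right :
    LinearMap.ker f ⊓ p ≤ p)).finrank_eq] at h
  exact h


section
variable {k : Type*} [Field k] {σ : Type*}


/-- homogeneous component of a product with a homogeneous factor. -/
lemma hc_mul {q : MvPolynomial σ k} {t : ℕ} (hq : q.IsHomogeneous t)
    (p : MvPolynomial σ k) {m : ℕ} (ht : t ≤ m) :
    homogeneousComponent m (p * q) = homogeneousComponent (m - t) p * q := by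
  induction p using MvPolynomial.induction_on' with
  | monomial u r =>
    have h1 : (monomial u r * q).IsHomogeneous (u.degree + t) :=
      (isHomogeneous_monomial r rfl).mul hq
    have h2 := homogeneousComponent_of_mem (mem_homogeneousSubmodule _ _ |>.mpr h1) (m := m)
    have h3 := homogeneousComponent_of_mem
      (mem_homogeneousSubmodule _ _ |>.mpr (isHomogeneous_monomial r (n := u.degree) rfl))
      (m := m - t)
    by_cases h : u.degree + t = m
    · rw [h2, if_pos h.symm, h3, if_pos (by omega)]
    · rw [h2, if_neg (fun hh => h hh.symm), h3, if_neg (by omega), zero_mul]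
  | add p1 p2 ih1 ih2 =>
    rw [add_mul, map_add, map_add, ih1, ih2, add_mul]

lemma deg_of_mem_support {p : MvPolynomial σ k} {t : ℕ} (hp : p.IsHomogeneous t)
    {u : σ →₀ ℕ} (hu : u ∈ p.support) : u.degree = t := by
  have := hp (MvPolynomial.mem_support_iff.mp hu)
  rwa [Finsupp.degree_eq_weight_one]

lemma supp_coord_eq_zero {p : MvPolynomial σ k} {j : σ}
    (h : j ∉ p.vars) {u : σ →₀ ℕ} (hu : u ∈ p.support) : u j = 0 := by
  by_contra hj
  exact h ((mem_vars j).mpr ⟨u, hu, Finsupp.mem_support_iff.mpr hj⟩)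



lemma ne_zero_of_relprime {F G : MvPolynomial σ k} {d : ℕ} (hd : 1 ≤ d)
    (hFhom : F.IsHomogeneous d) (hcop : IsRelPrime F G) : G ≠ 0 := by
  intro hG
  subst hG
  have hF : IsUnit F := hcop (dvd_refl F) (dvd_zero F)
  obtain ⟨u, hu⟩ := isUnit_iff_exists_inv.mp hF
  have h0 : constantCoeff F = 0 := by
    rw [constantCoeff_eq]
    exact hFhom.coeff_eq_zero (by simp [Finsupp.degree]; omega)
  have := congrArg constantCoeff hu
  rw [map_mul, map_one, h0, zero_mul] at this
  exact zero_ne_one this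


end

/-- shifting by `single a 1`. -/
lemma card_P10 {N : ℕ} (a b : Fin N) (hab : a ≠ b) (m : ℕ) (hm : 1 ≤ m) :
    Nat.card {u : Fin N →₀ ℕ // u.degree = m ∧ u a = 1 ∧ u b = 0}
      = Nat.card {u : Fin N →₀ ℕ // u.degree = m - 1 ∧ u a = 0 ∧ u b = 0} := by
  symm
  apply Nat.card_congr
  refine Equiv.ofBijective (fun v => ⟨v.1 + Finsupp.single a 1, ?_, ?_, ?_⟩) ⟨?_, ?_⟩
  · rw [degree_add', degree_single', v.2.1]; omega
  · simp [v.2.2.1]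
  · simp [v.2.2.2, Finsupp.single_apply, hab]
  · intro v w h
    have := congrArg Subtype.val h
    exact Subtype.ext (by simpa using this)
  · rintro ⟨u, hu, hua, hub⟩
    have hle : Finsupp.single a 1 ≤ u := Finsupp.single_le_iff.mpr (by omega)
    refine ⟨⟨u - Finsupp.single a 1, ?_, ?_, ?_⟩, ?_⟩
    · have h1 : (u - Finsupp.single a 1) + Finsupp.single a 1 = u := tsub_add_cancel_of_le hle
      have := congrArg Finsupp.degree h1
      rw [degree_add', degree_single'] at this
      omega
    · rw [Finsupp.tsub_apply]; simp [hua]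
    · rw [Finsupp.tsub_apply]; simp [hub, Finsupp.single_apply, hab]
    · exact Subtype.ext (tsub_add_cancel_of_le hle)

/-- exponents supported away from the two first variables. -/
lemma card_P00 {n : ℕ} (hn : 3 ≤ n) (h0 h1 : 0 < n + 1) (t : ℕ) :
    Nat.card {u : Fin (n+1) →₀ ℕ // u.degree = t ∧
        u ⟨0, h0⟩ = 0 ∧ u ⟨1, by omega⟩ = 0}
      = Nat.card {w : Fin (n-1) →₀ ℕ // w.degree = t} := by
  symm
  apply Nat.card_congr
  have einj : Function.Injective (fun i : Fin (n-1) => (⟨(i : ℕ) + 2, by omega⟩ : Fin (n+1))) := by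
    intro i j hij
    have := congrArg Fin.val hij
    simp only at this
    exact Fin.ext (by omega)
  set e : Fin (n-1) ↪ Fin (n+1) := ⟨fun i => ⟨(i : ℕ) + 2, by omega⟩, einj⟩ with he
  have hdeg : ∀ w : Fin (n-1) →₀ ℕ, (Finsupp.embDomain e w).degree = w.degree := by
    intro w
    rw [Finsupp.degree_apply, Finsupp.degree_apply, Finsupp.support_embDomain, Finset.sum_map]
    exact Finset.sum_congr rfl (fun i _ => Finsupp.embDomain_apply_self e w i)
  have hnotin : ∀ (j : Fin (n+1)), (j : ℕ) < 2 → j ∉ Set.range ⇑e := by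
    rintro j hj ⟨i, rfl⟩
    simp only [he, Function.Embedding.coeFn_mk] at hj
    omega
  refine Equiv.ofBijective (fun w => ⟨Finsupp.embDomain e w, hdeg w ▸ w.2, ?_, ?_⟩) ⟨?_, ?_⟩
  · exact Finsupp.embDomain_notin_range _ _ _ (hnotin _ (by norm_num))
  · exact Finsupp.embDomain_notin_range _ _ _ (hnotin _ (by norm_num))
  · intro v w h
    exact Subtype.ext (Finsupp.embDomain_injective e (congrArg Subtype.val h))
  · rintro ⟨u, hu, hu0, hu1⟩
    classical
    set w := Finsupp.comapDomain ⇑e u (einj.injOn) with hw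
    have hemb : Finsupp.embDomain e w = u := by
      ext j
      by_cases hj : ∃ i, e i = j
      · obtain ⟨i, rfl⟩ := hj
        rw [Finsupp.embDomain_apply_self, Finsupp.comapDomain_apply]
      · rw [Finsupp.embDomain_notin_range _ _ _ (fun ⟨i, hi⟩ => hj ⟨i, hi⟩)]
        have hj2 : (j : ℕ) < 2 := by
          by_contra hge
          exact hj ⟨⟨(j : ℕ) - 2, by omega⟩, Fin.ext (by simp [he]; omega)⟩
        have hj01 : (j : ℕ) = 0 ∨ (j : ℕ) = 1 := by omega
        rcases hj01 with hj0 | hj1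
        · have : j = ⟨0, h0⟩ := Fin.ext (by simp only [Fin.val_mk]; omega)
          rw [this, hu0]
        · have : j = ⟨1, by omega⟩ := Fin.ext (by simp only [Fin.val_mk]; omega)
          rw [this, hu1]
    refine ⟨⟨w, ?_⟩, Subtype.ext hemb⟩
    rw [← hdeg w, hemb, hu]




lemma arith_d1 (N s : ℕ) :
    (N+s+2).choose (s+2) + 2 * (N+s+1).choose (s+1) - (N+s).choose s
      = 2 * (N+s+2).choose (s+2) - (N+s).choose (s+2) := by
  have P1 : (N+s+2).choose (s+2) = (N+s+1).choose (s+1) + (N+s+1).choose (s+2) :=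
    Nat.choose_succ_succ (N+s+1) (s+1)
  have P2 : (N+s+1).choose (s+2) = (N+s).choose (s+1) + (N+s).choose (s+2) :=
    Nat.choose_succ_succ (N+s) (s+1)
  have P3 : (N+s+1).choose (s+1) = (N+s).choose s + (N+s).choose (s+1) :=
    Nat.choose_succ_succ (N+s) s
  omega

lemma arith_d2 (N s e : ℕ) (hN : 1 ≤ N) :
    (N+s+e+4).choose (s+e+4) + 2 * (N+s+e+3).choose (s+e+3) - (N+s+1).choose (s+1)
      ≠ 2 * (N+s+e+4).choose (s+e+4) - (N+s+e+2).choose (s+e+4) := by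
  have P1 : (N+s+e+4).choose (s+e+4) = (N+s+e+3).choose (s+e+3) + (N+s+e+3).choose (s+e+4) :=
    Nat.choose_succ_succ (N+s+e+3) (s+e+3)
  have P2 : (N+s+e+3).choose (s+e+4) = (N+s+e+2).choose (s+e+3) + (N+s+e+2).choose (s+e+4) :=
    Nat.choose_succ_succ (N+s+e+2) (s+e+3)
  have P3 : (N+s+e+3).choose (s+e+3) = (N+s+e+2).choose (s+e+2) + (N+s+e+2).choose (s+e+3) :=
    Nat.choose_succ_succ (N+s+e+2) (s+e+2)
  have hc : (N+s+1).choose (s+1) = (N+s+1).choose N := by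
    have := Nat.choose_symm_add (a := N) (b := s+1)
    rw [(by omega : N + (s+1) = N+s+1)] at this
    omega
  have hW0 : (N+s+e+2).choose (s+e+2) = (N+s+e+2).choose N := by
    have := Nat.choose_symm_add (a := N) (b := s+e+2)
    rw [(by omega : N + (s+e+2) = N+s+e+2)] at this
    omega
  have hlt : (N+s+1).choose N < (N+s+e+2).choose N := by
    obtain ⟨N', rfl⟩ : ∃ N', N = N'+1 := ⟨N-1, by omega⟩
    calc (N'+1+s+1).choose (N'+1) ≤ (N'+s+e+2).choose (N'+1) :=
          Nat.choose_le_choose _ (by omega)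
      _ < (N'+s+e+2).choose N' + (N'+s+e+2).choose (N'+1) := by
          have := Nat.choose_pos (n := N'+s+e+2) (k := N') (by omega)
          omega
      _ = (N'+s+e+3).choose (N'+1) := (Nat.choose_succ_succ (N'+s+e+2) N').symm
      _ = (N'+1+s+e+2).choose (N'+1) := by congr 1 <;> try omega
  omega


lemma card_P10' {N : ℕ} (a b : Fin N) (hab : a ≠ b) (m : ℕ) (hm : 1 ≤ m) :
    Nat.card ↥{u : Fin N →₀ ℕ | u.degree = m ∧ u a = 1 ∧ u b = 0}
      = Nat.card ↥{u : Fin N →₀ ℕ | u.degree = m - 1 ∧ u a = 0 ∧ u b = 0} :=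
  card_P10 a b hab m hm

lemma card_P00' {n : ℕ} (hn : 3 ≤ n) (h0 h1 : 0 < n + 1) (t : ℕ) :
    Nat.card ↥{u : Fin (n+1) →₀ ℕ | u.degree = t ∧
        u ⟨0, h0⟩ = 0 ∧ u ⟨1, by omega⟩ = 0}
      = (n - 2 + t).choose t := by
  have h1 := card_P00 hn h0 (by omega) t
  have h2 := card_degree (n-1) t
  rw [(show (Nat.card ↥{u : Fin (n+1) →₀ ℕ | u.degree = t ∧
        u ⟨0, h0⟩ = 0 ∧ u ⟨1, by omega⟩ = 0}) = Nat.card {u : Fin (n+1) →₀ ℕ // u.degree = t ∧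
        u ⟨0, h0⟩ = 0 ∧ u ⟨1, by omega⟩ = 0} from rfl), h1, h2]
  congr 1
  omega

lemma bridge1 (n m : ℕ) (hn : 3 ≤ n) (hm : n + 1 + 5 ≤ m) :
    (n-2+m).choose m + 2 * ((n-2+(m-1)).choose (m-1)) - (n-2+(m-1-1)).choose (m-1-1)
      = 2 * ((n-1) + m - 1).choose m - ((n-3) + m - 1).choose m := by
  obtain ⟨N, rfl⟩ : ∃ N, n = N + 3 := ⟨n-3, by omega⟩
  obtain ⟨s, rfl⟩ : ∃ s, m = s + 2 := ⟨m-2, by omega⟩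
  have h := arith_d1 (N+1) s
  have k1 : (N + 3 - 2 + (s + 2)).choose (s+2) = (N+1+s+2).choose (s+2) := by congr 1 <;> try omega
  have k2 : (N + 3 - 2 + (s + 2 - 1)).choose (s+2-1) = (N+1+s+1).choose (s+1) := by
    congr 1 <;> try omega
  have k3 : (N + 3 - 2 + (s + 2 - 1 - 1)).choose (s+2-1-1) = (N+1+s).choose s := by
    congr 1 <;> try omega
  have k4 : (N + 3 - 1 + (s + 2) - 1).choose (s+2) = (N+1+s+2).choose (s+2) := by
    congr 1 <;> try omega
  have k5 : (N + 3 - 3 + (s + 2) - 1).choose (s+2) = (N+1+s).choose (s+2) := by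
    congr 1 <;> try omega
  rw [k1, k2, k3, k4, k5]
  exact h

lemma bridge2 (n d m : ℕ) (hn : 3 ≤ n) (hd2 : 2 ≤ d) (hm : n + d + 5 ≤ m) :
    (n-2+m).choose m + 2 * ((n-2+(m-1)).choose (m-1)) - (n-2+(m-1-d)).choose (m-1-d)
      ≠ 2 * ((n-1) + m - 1).choose m - ((n-3) + m - 1).choose m := by
  obtain ⟨N, rfl⟩ : ∃ N, n = N + 3 := ⟨n-3, by omega⟩
  obtain ⟨e, rfl⟩ : ∃ e, d = e + 2 := ⟨d-2, by omega⟩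
  obtain ⟨s, rfl⟩ : ∃ s, m = s + e + 4 := ⟨m - e - 4, by omega⟩
  have h := arith_d2 (N+1) s e (by omega)
  have k1 : (N + 3 - 2 + (s + e + 4)).choose (s+e+4) = (N+1+s+e+4).choose (s+e+4) := by
    congr 1 <;> try omega
  have k2 : (N + 3 - 2 + (s + e + 4 - 1)).choose (s+e+4-1) = (N+1+s+e+3).choose (s+e+3) := by
    congr 1 <;> try omega
  have k3 : (N + 3 - 2 + (s + e + 4 - 1 - (e+2))).choose (s+e+4-1-(e+2))
      = (N+1+s+1).choose (s+1) := by congr 1 <;> try omega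
  have k4 : (N + 3 - 1 + (s + e + 4) - 1).choose (s+e+4) = (N+1+s+e+4).choose (s+e+4) := by
    congr 1 <;> try omega
  have k5 : (N + 3 - 3 + (s + e + 4) - 1).choose (s+e+4) = (N+1+s+e+2).choose (s+e+4) := by
    congr 1 <;> try omega
  rw [k1, k2, k3, k4, k5]
  exact h
lemma mem_restrictSupport_iff {k : Type*} [Field k] {N : ℕ} (s : Set (Fin N →₀ ℕ))
    (p : MvPolynomial (Fin N) k) : p ∈ restrictSupport k s ↔ ↑p.support ⊆ s :=
  MvPolynomial.mem_restrictSupport_iff k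

lemma restrictSupport_union {k : Type*} [Field k] {N : ℕ} (s t : Set (Fin N →₀ ℕ)) :
    restrictSupport k (s ∪ t) = restrictSupport k s ⊔ restrictSupport k t := by
  simp only [restrictSupport, AddMonoidAlgebra.supported, Finsupp.supported_union,
    Submodule.comap_equiv_eq_map_symm, Submodule.map_sup]

lemma finrank_restrict_union {k : Type*} [Field k] {N : ℕ} {s t : Set (Fin N →₀ ℕ)}
    (hdisj : Disjoint s t) (hs : s.Finite) (ht : t.Finite) :
    Module.finrank k (restrictSupport k (s ∪ t))
      = Module.finrank k (restrictSupport k s) + Module.finrank k (restrictSupport k t) := by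
  haveI := fd_restrictSupport (k := k) hs
  haveI := fd_restrictSupport (k := k) ht
  have h := Submodule.finrank_sup_add_finrank_inf_eq
    (restrictSupport k s) (restrictSupport k t)
  have hb : restrictSupport k s ⊓ restrictSupport k t = ⊥ :=
    (by
      rw [eq_bot_iff]; rintro p ⟨hs, ht⟩
      have := (disjoint_iff.mp (Finsupp.disjoint_supported_supported (M := k) (R := k) hdisj)).le
        ⟨hs, ht⟩
      rw [Submodule.mem_bot] at this ⊢
      exact congrArg AddMonoidAlgebra.ofCoeff this)
  rw [hb] at h
  rw [restrictSupport_union]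
  simp only [finrank_bot, add_zero] at h
  exact h

theorem master {k : Type*} [Field k] {n : ℕ} (hn : 3 ≤ n)
    (F G : MvPolynomial (Fin (n + 1)) k) {d : ℕ} (hd : 1 ≤ d)
    (hFvars : ∀ i ∈ F.vars, 2 ≤ (i : ℕ)) (hGvars : ∀ i ∈ G.vars, 2 ≤ (i : ℕ))
    (hFhom : F.IsHomogeneous d) (hGhom : G.IsHomogeneous d)
    (hcop : IsRelPrime F G)
    (I : Ideal (MvPolynomial (Fin (n + 1)) k))
    (hI : I = Ideal.span {X (⟨0, Nat.zero_lt_succ n⟩ : Fin (n + 1)) ^ 2,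
        X (⟨0, Nat.zero_lt_succ n⟩ : Fin (n + 1)) * X ⟨1, Nat.succ_lt_succ (Nat.zero_lt_of_lt (Nat.lt_of_lt_of_le (Nat.lt_succ_self 2) hn))⟩,
        X (⟨1, Nat.succ_lt_succ (Nat.zero_lt_of_lt (Nat.lt_of_lt_of_le (Nat.lt_succ_self 2) hn))⟩ : Fin (n + 1)) ^ 2,
        X (⟨0, Nat.zero_lt_succ n⟩ : Fin (n + 1)) * G - X (⟨1, Nat.succ_lt_succ (Nat.zero_lt_of_lt (Nat.lt_of_lt_of_le (Nat.lt_succ_self 2) hn))⟩ : Fin (n + 1)) * F})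
    {m : ℕ} (hm : n + d + 5 ≤ m) :
    Module.finrank k
        ((homogeneousSubmodule (Fin (n + 1)) k m).map
          (Ideal.Quotient.mkₐ k I).toLinearMap)
      = (n - 2 + m).choose m + 2 * ((n - 2 + (m-1)).choose (m-1))
          - (n - 2 + (m-1-d)).choose (m-1-d) := by
  classical
  set i0 : Fin (n+1) := ⟨0, Nat.zero_lt_succ n⟩ with hi0
  set i1 : Fin (n+1) := ⟨1, Nat.succ_lt_succ (Nat.zero_lt_of_lt (Nat.lt_of_lt_of_le (Nat.lt_succ_self 2) hn))⟩ with hi1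
  have hne : i0 ≠ i1 := by simp [hi0, hi1, Fin.ext_iff]
  set x0 : MvPolynomial (Fin (n+1)) k := X i0 with hx0
  set x1 : MvPolynomial (Fin (n+1)) k := X i1 with hx1
  set g4 : MvPolynomial (Fin (n+1)) k := x0 * G - x1 * F with hg4
  -- support facts for F and G
  have hFsupp : ∀ u ∈ F.support, u i0 = 0 ∧ u i1 = 0 := by
    intro u hu
    constructor <;> refine supp_coord_eq_zero (fun hv => ?_) hu
    · have := hFvars i0 hv; simp [hi0] at this
    · have := hFvars i1 hv; simp [hi1] at this
  have hGsupp : ∀ u ∈ G.support, u i0 = 0 ∧ u i1 = 0 := by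
    intro u hu
    constructor <;> refine supp_coord_eq_zero (fun hv => ?_) hu
    · have := hGvars i0 hv; simp [hi0] at this
    · have := hGvars i1 hv; simp [hi1] at this
  have hG0 : G ≠ 0 := ne_zero_of_relprime hd hFhom hcop
  -- the sets
  set T : Set (Fin (n+1) →₀ ℕ) := {u | u.degree = m ∧ 2 ≤ u i0 + u i1} with hT
  set P : ℕ → Set (Fin (n+1) →₀ ℕ) := fun t => {u | u.degree = t ∧ u i0 = 0 ∧ u i1 = 0} with hP
  set P10 : Set (Fin (n+1) →₀ ℕ) := {u | u.degree = m ∧ u i0 = 1 ∧ u i1 = 0} with hP10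
  set P01 : Set (Fin (n+1) →₀ ℕ) := {u | u.degree = m ∧ u i0 = 0 ∧ u i1 = 1} with hP01
  set J : Submodule k (MvPolynomial (Fin (n+1)) k) := restrictSupport k T with hJ
  set E : Submodule k (MvPolynomial (Fin (n+1)) k) := restrictSupport k (P (m-1-d)) with hE
  set φ : MvPolynomial (Fin (n+1)) k →ₗ[k] MvPolynomial (Fin (n+1)) k :=
    LinearMap.mulLeft k g4 with hφ
  set Smod := homogeneousSubmodule (Fin (n+1)) k m with hSmod
  have hg4hom : g4.IsHomogeneous (1 + d) :=
    (((isHomogeneous_X k i0).mul hGhom).sub ((isHomogeneous_X k i1).mul hFhom))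
  have hg4supp : ∀ w ∈ g4.support, w.degree = 1 + d ∧ w i0 + w i1 = 1 := by
    intro w hw
    refine ⟨deg_of_mem_support hg4hom hw, ?_⟩
    have hw2 := MvPolynomial.support_sub _ (x0 * G) (x1 * F) (hg4 ▸ hw)
    have hsplit : ∀ (j : Fin (n+1)) (H : MvPolynomial (Fin (n+1)) k),
        (∀ u ∈ H.support, u i0 = 0 ∧ u i1 = 0) →
        w ∈ (X j * H).support → w i0 = (Finsupp.single j 1) i0 + 0 ∧
          w i1 = (Finsupp.single j 1) i1 + 0 := by
      intro j H hH hwj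
      have := MvPolynomial.support_mul (X j) H hwj
      rw [Finset.mem_add] at this
      obtain ⟨v, hv, c, hc, rfl⟩ := this
      rw [support_X] at hv
      rw [Finset.mem_singleton] at hv
      subst hv
      obtain ⟨hc0, hc1⟩ := hH c hc
      constructor
      · rw [Finsupp.add_apply, hc0]
      · rw [Finsupp.add_apply, hc1]
    rw [Finset.mem_union] at hw2
    rcases hw2 with h | h
    · obtain ⟨h0, h1⟩ := hsplit i0 G hGsupp (by rwa [hx0] at h)
      rw [h0, h1]
      simp [Finsupp.single_apply, hne]
    · obtain ⟨h0, h1⟩ := hsplit i1 F hFsupp (by rwa [hx1] at h)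
      rw [h0, h1]
      simp [Finsupp.single_apply, hne, Ne.symm hne]
  -- key injectivity lemma
  have key : ∀ a, a ∈ E → g4 * a ∈ J → a = 0 := by
    intro a haE haJ
    by_contra ha0
    have hsa : ∀ u ∈ a.support, u.degree = m-1-d ∧ u i0 = 0 ∧ u i1 = 0 := by
      intro u hu
      exact (mem_restrictSupport_iff _ a).mp haE hu
    have hGa : G * a ≠ 0 := mul_ne_zero hG0 ha0
    obtain ⟨u, hu⟩ : (G * a).support.Nonempty := MvPolynomial.support_nonempty.mpr hGa
    have hu01 : u i0 = 0 ∧ u i1 = 0 := by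
      have := MvPolynomial.support_mul G a hu
      rw [Finset.mem_add] at this
      obtain ⟨v, hv, c, hc, rfl⟩ := this
      obtain ⟨hv0, hv1⟩ := hGsupp v hv
      obtain ⟨_, hc0, hc1⟩ := hsa c hc
      constructor
      · rw [Finsupp.add_apply, hv0, hc0]
      · rw [Finsupp.add_apply, hv1, hc1]
    set v : Fin (n+1) →₀ ℕ := Finsupp.single i0 1 + u with hv
    have cv : coeff v (x0 * (G * a)) = coeff u (G * a) := by
      rw [hx0, hv]; exact coeff_X_mul u i0 (G * a)
    have hv1 : v i1 = 0 := by
      rw [hv, Finsupp.add_apply, Finsupp.single_apply, if_neg hne, hu01.2]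
    have cv2 : coeff v (x1 * (F * a)) = 0 := by
      rw [hx1, coeff_X_mul']
      rw [if_neg (by rw [Finsupp.mem_support_iff]; simpa using hv1)]
    have hexp : g4 * a = x0 * (G * a) - x1 * (F * a) := by rw [hg4]; ring
    have hcv : coeff v (g4 * a) ≠ 0 := by
      rw [hexp, MvPolynomial.coeff_sub, cv, cv2, sub_zero]
      exact MvPolynomial.mem_support_iff.mp hu
    have hvT : v ∈ T := (mem_restrictSupport_iff _ _).mp haJ
      (by exact MvPolynomial.mem_support_iff.mpr hcv)
    rw [hT] at hvT
    obtain ⟨_, hge⟩ := hvT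
    have hv0 : v i0 = 1 := by
      rw [hv, Finsupp.add_apply, Finsupp.single_apply, if_pos rfl, hu01.1]
    omega
  -- kernel of the quotient map
  have hker : LinearMap.ker (Ideal.Quotient.mkₐ k I).toLinearMap
      = Submodule.restrictScalars k I := by
    ext x
    simp only [LinearMap.mem_ker, AlgHom.toLinearMap_apply, Ideal.Quotient.mkₐ_eq_mk,
      Submodule.restrictScalars_mem, Ideal.Quotient.eq_zero_iff_mem]
  -- monomial forms of the generators
  have hXmon : ∀ j : Fin (n+1), (X j : MvPolynomial (Fin (n+1)) k)
      = monomial (Finsupp.single j 1) 1 := by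
    intro j; rw [← X_pow_eq_monomial, pow_one]
  have hx0x1 : x0 * x1 = monomial (Finsupp.single i0 1 + Finsupp.single i1 1) (1 : k) := by
    rw [hx0, hx1, hXmon, hXmon, monomial_mul, one_mul]
  have hq1 : (x0^2).IsHomogeneous 2 := by rw [hx0]; exact isHomogeneous_X_pow i0 2
  have hq2 : (x0*x1).IsHomogeneous 2 := by
    rw [hx0, hx1]; exact (isHomogeneous_X k i0).mul (isHomogeneous_X k i1)
  have hq3 : (x1^2).IsHomogeneous 2 := by rw [hx1]; exact isHomogeneous_X_pow i1 2
  -- membership criterion for J via monomial multiples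
  have hmulJ : ∀ (p : MvPolynomial (Fin (n+1)) k) (w : Fin (n+1) →₀ ℕ) (c : k),
      p.IsHomogeneous (m-2) → w.degree = 2 → 2 ≤ w i0 + w i1 →
      p * monomial w c ∈ J := by
    intro p w c hp hw2 hwc
    rw [hJ, mem_restrictSupport_iff]
    intro u hu
    rw [Finset.mem_coe] at hu
    have hsub := MvPolynomial.support_mul p (monomial w c) hu
    rw [Finset.mem_add] at hsub
    obtain ⟨v, hv, w2, hw2', rfl⟩ := hsub
    have hww : w2 = w := by
      have := MvPolynomial.support_monomial_subset hw2'
      rwa [Finset.mem_singleton] at this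
    rw [hww]
    have hdv : v.degree = m - 2 := deg_of_mem_support hp hv
    refine ⟨?_, ?_⟩
    · show (v + w).degree = m
      rw [degree_add', hdv, hw2]; omega
    · show 2 ≤ (v + w) i0 + (v + w) i1
      rw [Finsupp.add_apply, Finsupp.add_apply]; omega
  -- structure of the degree-m piece of I
  have hstruct : Submodule.restrictScalars k I ⊓ Smod = J ⊔ E.map φ := by
    apply le_antisymm
    · rintro x hx
      rw [Submodule.mem_inf] at hx
      obtain ⟨hxI, hxm⟩ := hx
      rw [Submodule.restrictScalars_mem, hI, Ideal.mem_span_insert] at hxI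
      obtain ⟨p1, z1, hz1, rfl⟩ := hxI
      rw [Ideal.mem_span_insert] at hz1
      obtain ⟨p2, z2, hz2, rfl⟩ := hz1
      rw [Ideal.mem_span_insert] at hz2
      obtain ⟨p3, z3, hz3, rfl⟩ := hz2
      rw [Ideal.mem_span_singleton] at hz3
      obtain ⟨p4, rfl⟩ := hz3
      rw [hSmod] at hxm
      have hxeq := homogeneousComponent_of_mem (m := m) hxm
      rw [if_pos rfl] at hxeq
      have hhm : (homogeneousComponent m)
            (p1 * x0 ^ 2 + (p2 * (x0 * x1) + (p3 * x1 ^ 2 + g4 * p4)))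
          = homogeneousComponent (m-2) p1 * x0^2 + (homogeneousComponent (m-2) p2 * (x0*x1)
            + (homogeneousComponent (m-2) p3 * x1^2
              + homogeneousComponent (m-(1+d)) p4 * g4)) := by
        rw [map_add, map_add, map_add, mul_comm g4 p4,
          hc_mul hq1 p1 (by omega), hc_mul hq2 p2 (by omega), hc_mul hq3 p3 (by omega),
          hc_mul hg4hom p4 (by omega)]
      rw [← hxeq, hhm]
      have t1 : homogeneousComponent (m-2) p1 * x0^2 ∈ J := by
        rw [hx0, X_pow_eq_monomial]
        exact hmulJ _ _ _ (homogeneousComponent_isHomogeneous (m-2) p1)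
          (degree_single' _ _) (by simp [Finsupp.single_apply, hne])
      have t2 : homogeneousComponent (m-2) p2 * (x0*x1) ∈ J := by
        rw [hx0x1]
        refine hmulJ _ _ _ (homogeneousComponent_isHomogeneous (m-2) p2) ?_ ?_
        · rw [degree_add', degree_single', degree_single']
        · simp [Finsupp.add_apply, Finsupp.single_apply, hne, Ne.symm hne]
      have t3 : homogeneousComponent (m-2) p3 * x1^2 ∈ J := by
        rw [hx1, X_pow_eq_monomial]
        exact hmulJ _ _ _ (homogeneousComponent_isHomogeneous (m-2) p3)
          (degree_single' _ _) (by simp [Finsupp.single_apply, Ne.symm hne])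
      -- the g4-term
      set q4 := homogeneousComponent (m-(1+d)) p4 with hq4def
      have hq4hom : q4.IsHomogeneous (m-(1+d)) := homogeneousComponent_isHomogeneous _ p4
      set av : MvPolynomial (Fin (n+1)) k :=
        AddMonoidAlgebra.ofCoeff (Finsupp.filter (fun u : Fin (n+1) →₀ ℕ => u i0 = 0 ∧ u i1 = 0)
          (AddMonoidAlgebra.coeff q4)) with hadef
      set bv : MvPolynomial (Fin (n+1)) k :=
        AddMonoidAlgebra.ofCoeff (Finsupp.filter (fun u : Fin (n+1) →₀ ℕ => ¬(u i0 = 0 ∧ u i1 = 0))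
          (AddMonoidAlgebra.coeff q4)) with hbdef
      have hab : q4 = av + bv := by
        apply MvPolynomial.ext
        intro u
        rw [MvPolynomial.coeff_add, hadef, hbdef]
        change AddMonoidAlgebra.coeff q4 u = (Finsupp.filter _ (AddMonoidAlgebra.coeff q4)) u
          + (Finsupp.filter _ (AddMonoidAlgebra.coeff q4)) u
        rw [Finsupp.filter_apply, Finsupp.filter_apply]
        by_cases h : (u i0 = 0 ∧ u i1 = 0)
        · rw [if_pos h, if_neg (not_not_intro h), add_zero]
        · rw [if_neg h, if_pos h, zero_add]
      have t4a : av * g4 ∈ E.map φ := by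
        have haE : av ∈ E := by
          rw [hE, mem_restrictSupport_iff]
          intro u hu
          rw [Finset.mem_coe, hadef, ← MvPolynomial.finsupp_support_eq_support, AddMonoidAlgebra.coeff_ofCoeff,
            Finsupp.support_filter, Finset.mem_filter] at hu
          obtain ⟨hu1, hu2⟩ := hu
          refine ⟨?_, hu2.1, hu2.2⟩
          have := deg_of_mem_support hq4hom hu1
          rw [this]; omega
        have : av * g4 = φ av := by rw [hφ, LinearMap.mulLeft_apply, mul_comm]
        rw [this]
        exact Submodule.mem_map_of_mem haE
      have t4b : bv * g4 ∈ J := by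
        rw [hJ, mem_restrictSupport_iff]
        intro u hu
        rw [Finset.mem_coe] at hu
        have hsub := MvPolynomial.support_mul bv g4 hu
        rw [Finset.mem_add] at hsub
        obtain ⟨v, hv, w, hw, rfl⟩ := hsub
        rw [hbdef, ← MvPolynomial.finsupp_support_eq_support, AddMonoidAlgebra.coeff_ofCoeff,
          Finsupp.support_filter, Finset.mem_filter] at hv
        obtain ⟨hv1, hv2⟩ := hv
        have hdv : v.degree = m - (1+d) := deg_of_mem_support hq4hom hv1
        obtain ⟨hdw, hsw⟩ := hg4supp w hw
        refine ⟨?_, ?_⟩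
        · show (v + w).degree = m
          rw [degree_add', hdv, hdw]; omega
        · show 2 ≤ (v + w) i0 + (v + w) i1
          rw [Finsupp.add_apply, Finsupp.add_apply]
          omega
      refine add_mem (Submodule.mem_sup_left t1) (add_mem (Submodule.mem_sup_left t2)
        (add_mem (Submodule.mem_sup_left t3) ?_))
      rw [hab, add_mul]
      exact add_mem (Submodule.mem_sup_right t4a) (Submodule.mem_sup_left t4b)
    · rw [sup_le_iff]
      constructor
      · intro p hp
        have hpT : ↑p.support ⊆ T := (mem_restrictSupport_iff _ p).mp hp
        rw [Submodule.mem_inf]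
        constructor
        · rw [Submodule.restrictScalars_mem, hI, ← support_sum_monomial_coeff p]
          apply Ideal.sum_mem
          intro u hu
          have huT := hpT hu
          rw [hT, Set.mem_setOf_eq] at huT
          obtain ⟨hdeg, hsum⟩ := huT
          rcases (by omega : 2 ≤ u i0 ∨ 2 ≤ u i1 ∨ (1 ≤ u i0 ∧ 1 ≤ u i1)) with h|h|h
          · have hle : Finsupp.single i0 2 ≤ u := Finsupp.single_le_iff.mpr h
            have heq : monomial u (coeff u p)
                = x0^2 * monomial (u - Finsupp.single i0 2) (coeff u p) := by
              rw [hx0, X_pow_eq_monomial, monomial_mul, one_mul, add_tsub_cancel_of_le hle]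
            rw [heq]
            exact Ideal.mul_mem_right _ _ (Ideal.subset_span (by simp))
          · have hle : Finsupp.single i1 2 ≤ u := Finsupp.single_le_iff.mpr h
            have heq : monomial u (coeff u p)
                = x1^2 * monomial (u - Finsupp.single i1 2) (coeff u p) := by
              rw [hx1, X_pow_eq_monomial, monomial_mul, one_mul, add_tsub_cancel_of_le hle]
            rw [heq]
            exact Ideal.mul_mem_right _ _ (Ideal.subset_span (by simp))
          · have hle : (Finsupp.single i0 1 + Finsupp.single i1 1) ≤ u := by
              rw [Finsupp.le_def]
              intro j
              rw [Finsupp.add_apply, Finsupp.single_apply, Finsupp.single_apply]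
              by_cases e0 : i0 = j
              · subst e0
                rw [if_pos rfl, if_neg (Ne.symm hne)]
                omega
              · rw [if_neg e0]
                by_cases e1 : i1 = j
                · subst e1
                  rw [if_pos rfl]
                  omega
                · rw [if_neg e1]
                  omega
            have heq : monomial u (coeff u p)
                = (x0*x1) * monomial (u - (Finsupp.single i0 1 + Finsupp.single i1 1))
                    (coeff u p) := by
              rw [hx0x1, monomial_mul, one_mul, add_tsub_cancel_of_le hle]
            rw [heq]
            exact Ideal.mul_mem_right _ _ (Ideal.subset_span (by simp))
        · rw [hSmod, homSub_eq]
          exact restrictSupport_mono k (fun u hu => hu.1) hp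
      · rintro x' ⟨a, haE, rfl⟩
        have hahom : a.IsHomogeneous (m-1-d) := by
          have h1 : a ∈ homogeneousSubmodule (Fin (n+1)) k (m-1-d) := by
            rw [homSub_eq]
            exact restrictSupport_mono k (fun u hu => hu.1) haE
          exact (mem_homogeneousSubmodule _ _).mp h1
        have hφa : φ a = g4 * a := by rw [hφ, LinearMap.mulLeft_apply]
        rw [Submodule.mem_inf]
        constructor
        · rw [Submodule.restrictScalars_mem, hI, hφa]
          exact Ideal.mul_mem_right _ _ (Ideal.subset_span (by simp))
        · rw [hSmod, mem_homogeneousSubmodule, hφa]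
          have h2 := hg4hom.mul hahom
          have h3 : (1+d) + (m-1-d) = m := by omega
          rw [h3] at h2
          exact h2
  -- disjointness
  have hJV : J ⊓ E.map φ = ⊥ := by
    rw [eq_bot_iff]
    rintro x ⟨hxJ, a, haE, rfl⟩
    have : a = 0 := key a haE (by simpa [hφ] using hxJ)
    simp [this]
  have hkerφ : LinearMap.ker φ ⊓ E = ⊥ := by
    rw [eq_bot_iff]
    rintro x ⟨hk, hxE⟩
    rw [Submodule.mem_bot]
    refine key x hxE ?_
    have : g4 * x = 0 := by simpa [hφ] using hk
    rw [this]; exact J.zero_mem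
  -- finiteness
  have hTfin : T.Finite := finite_deg_subset (m := m) (fun u hu => le_of_eq hu.1)
  have hPfin : ∀ t, t ≤ m → (P t).Finite := fun t ht =>
    finite_deg_subset (m := m) (fun u hu => le_trans (le_of_eq hu.1) ht)
  haveI : FiniteDimensional k J := fd_restrictSupport hTfin
  haveI : FiniteDimensional k E := fd_restrictSupport (hPfin _ (by omega))
  haveI : FiniteDimensional k Smod := fd_homSub (n+1) m
  -- dimension counts
  have hfrE : Module.finrank k E = Nat.card ↥(P (m-1-d)) := by
    rw [hE]; exact finrank_restrictSupport (hPfin _ (by omega))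
  have hfrV : Module.finrank k (E.map φ) = Nat.card ↥(P (m-1-d)) := by
    have h := finrank_map_helper φ E
    rw [hkerφ] at h
    simp only [finrank_bot, add_zero] at h
    rw [h, hfrE]
  haveI : FiniteDimensional k (E.map φ) := Module.Finite.map E φ
  have hfrJV : Module.finrank k (J ⊔ E.map φ : Submodule k _)
      = Nat.card ↥T + Nat.card ↥(P (m-1-d)) := by
    have h := Submodule.finrank_sup_add_finrank_inf_eq J (E.map φ)
    rw [hJV] at h
    simp only [finrank_bot, add_zero] at h
    rw [h, hfrV]
    congr 1
    rw [hJ]; exact finrank_restrictSupport hTfin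
  have hP10fin : P10.Finite := finite_deg_subset (m := m) (fun u hu => le_of_eq hu.1)
  have hP01fin : P01.Finite := finite_deg_subset (m := m) (fun u hu => le_of_eq hu.1)
  have hfrS : Module.finrank k Smod
      = Nat.card ↥T + (Nat.card ↥(P m) + (Nat.card ↥P10 + Nat.card ↥P01)) := by
    have hsplit : {u : Fin (n+1) →₀ ℕ | u.degree = m} = T ∪ (P m ∪ (P10 ∪ P01)) := by
      ext u
      simp only [hT, hP, hP10, hP01, Set.mem_union, Set.mem_setOf_eq]
      constructor
      · intro h
        refine ?_
        by_cases h2 : 2 ≤ u i0 + u i1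
        · exact Or.inl ⟨h, h2⟩
        · right
          rcases Nat.lt_or_ge (u i0) 1 with h0 | h0 <;>
            rcases Nat.lt_or_ge (u i1) 1 with h1 | h1
          · exact Or.inl ⟨h, by omega, by omega⟩
          · exact Or.inr (Or.inr ⟨h, by omega, by omega⟩)
          · exact Or.inr (Or.inl ⟨h, by omega, by omega⟩)
          · omega
      · rintro (h | h | h | h) <;> exact h.1
    have d1 : Disjoint T (P m ∪ (P10 ∪ P01)) := by
      rw [Set.disjoint_left]
      rintro u hu hv
      simp only [hT, hP, hP10, hP01, Set.mem_union, Set.mem_setOf_eq] at hu hv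
      omega
    have d2 : Disjoint (P m) (P10 ∪ P01) := by
      rw [Set.disjoint_left]
      rintro u hu hv
      simp only [hP, hP10, hP01, Set.mem_union, Set.mem_setOf_eq] at hu hv
      omega
    have d3 : Disjoint P10 P01 := by
      rw [Set.disjoint_left]
      rintro u hu hv
      simp only [hP10, hP01, Set.mem_setOf_eq] at hu hv
      omega
    rw [hSmod, homSub_eq, hsplit,
      finrank_restrict_union d1 hTfin (((hPfin m le_rfl).union (hP10fin.union hP01fin))),
      finrank_restrict_union d2 (hPfin m le_rfl) (hP10fin.union hP01fin),
      finrank_restrict_union d3 hP10fin hP01fin,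
      finrank_restrictSupport hTfin, finrank_restrictSupport (hPfin m le_rfl),
      finrank_restrictSupport hP10fin, finrank_restrictSupport hP01fin]
  -- rank-nullity for the quotient map
  have hmain := finrank_map_helper (Ideal.Quotient.mkₐ k I).toLinearMap Smod
  rw [hker, hstruct, hfrJV, hfrS] at hmain
  -- identify the cardinalities with binomials
  have hcP : ∀ t, Nat.card ↥(P t) = (n - 2 + t).choose t := by
    intro t
    simp only [hP]
    exact card_P00' hn (by omega) (by omega) t
  have hc10 : Nat.card ↥P10 = (n - 2 + (m-1)).choose (m-1) := by
    simp only [hP10]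
    rw [card_P10' i0 i1 hne m (by omega)]
    have := hcP (m-1)
    simp only [hP] at this
    exact this
  have hc01 : Nat.card ↥P01 = (n - 2 + (m-1)).choose (m-1) := by
    simp only [hP01]
    have e1 : Nat.card ↥{u : Fin (n+1) →₀ ℕ | u.degree = m ∧ u i0 = 0 ∧ u i1 = 1}
        = Nat.card ↥{u : Fin (n+1) →₀ ℕ | u.degree = m ∧ u i1 = 1 ∧ u i0 = 0} :=
      Nat.card_congr (Equiv.subtypeEquivRight (fun u => ⟨fun h => ⟨h.1, h.2.2, h.2.1⟩, fun h => ⟨h.1, h.2.2, h.2.1⟩⟩))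
    rw [e1, card_P10' i1 i0 (Ne.symm hne) m (by omega)]
    have e2 : Nat.card ↥{u : Fin (n+1) →₀ ℕ | u.degree = m - 1 ∧ u i1 = 0 ∧ u i0 = 0}
        = Nat.card ↥(P (m-1)) :=
      Nat.card_congr (Equiv.subtypeEquivRight (fun u => ⟨fun h => ⟨h.1, h.2.2, h.2.1⟩, fun h => ⟨h.1, h.2.2, h.2.1⟩⟩))
    rw [e2, hcP]
  rw [hcP, hcP, hc10, hc01] at hmain
  omega

end Stmt6Aux


/-- let `I = (x₀², x₀x₁, x₁², x₀G - x₁F)` with `F, G` relatively prime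
homogeneous of degree `d ≥ 1` in `k[x₂,…,xₙ]`. For all large `m`,
`dim_k (S/I)_m = C(n-2+m,m) + 2C(n-3+m,m-1) - C(n-3+m-d,m-1-d)`; and this agrees with
`Pₙ(m) = 2C(n-2+m,m) - C(n-4+m,m)` (encoded as twice the dimension of the degree-`m`
piece of a polynomial ring in `n-1` variables minus that of one in `n-3` variables,
which is the correct interpretation also for `n = 3`) for all large `m` iff `d = 1`. -/
theorem stmt_6 (k : Type*) [Field k] (n : ℕ) (hn : 3 ≤ n)
    (F G : MvPolynomial (Fin (n + 1)) k) (d : ℕ) (hd : 1 ≤ d)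
    (hFvars : ∀ i ∈ F.vars, 2 ≤ (i : ℕ)) (hGvars : ∀ i ∈ G.vars, 2 ≤ (i : ℕ))
    (hFhom : F.IsHomogeneous d) (hGhom : G.IsHomogeneous d)
    (hcop : IsRelPrime F G)
    (I : Ideal (MvPolynomial (Fin (n + 1)) k))
    (hI : I = Ideal.span {X (⟨0, by omega⟩ : Fin (n + 1)) ^ 2,
        X (⟨0, by omega⟩ : Fin (n + 1)) * X ⟨1, by omega⟩,
        X (⟨1, by omega⟩ : Fin (n + 1)) ^ 2,
        X (⟨0, by omega⟩ : Fin (n + 1)) * G - X (⟨1, by omega⟩ : Fin (n + 1)) * F}) :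
    (∃ M : ℕ, ∀ m ≥ M,
      Module.finrank k
        ((homogeneousSubmodule (Fin (n + 1)) k m).map
          (Ideal.Quotient.mkₐ k I).toLinearMap)
        = (n - 2 + m).choose m + 2 * (n - 3 + m).choose (m - 1)
            - (n - 3 + m - d).choose (m - 1 - d)) ∧
    ((∃ M : ℕ, ∀ m ≥ M,
      Module.finrank k
        ((homogeneousSubmodule (Fin (n + 1)) k m).map
          (Ideal.Quotient.mkₐ k I).toLinearMap)
        = 2 * Module.finrank k (homogeneousSubmodule (Fin (n - 1)) k m)
            - Module.finrank k (homogeneousSubmodule (Fin (n - 3)) k m)) ↔ d = 1) := by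
  constructor
  · refine ⟨n + d + 5, fun m hm => ?_⟩
    rw [Stmt6Aux.master hn F G hd hFvars hGvars hFhom hGhom hcop I hI hm]
    have e1 : (n-2+(m-1)).choose (m-1) = (n-3+m).choose (m-1) := by
      congr 1 <;> try omega
    have e2 : (n-2+(m-1-d)).choose (m-1-d) = (n-3+m-d).choose (m-1-d) := by
      congr 1 <;> try omega
    rw [e1, e2]
  · constructor
    · rintro ⟨M, hM⟩
      by_contra hd1
      have hd2 : 2 ≤ d := by omega
      set m := M + n + d + 5 with hmdef
      have h1 := Stmt6Aux.master hn F G hd hFvars hGvars hFhom hGhom hcop I hI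
        (m := m) (by omega)
      have h2 := hM m (by omega)
      rw [h1, Stmt6Aux.finrank_homSub, Stmt6Aux.finrank_homSub] at h2
      exact Stmt6Aux.bridge2 n d m hn hd2 (by omega) h2
    · rintro rfl
      refine ⟨n + 1 + 5, fun m hm => ?_⟩
      rw [Stmt6Aux.master hn F G hd hFvars hGvars hFhom hGhom hcop I hI (m := m) (by omega),
        Stmt6Aux.finrank_homSub, Stmt6Aux.finrank_homSub]
      exact Stmt6Aux.bridge1 n m hn hm
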